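/- Spoiler wins the 1-integer game in 2 moves: for any u ∈ 1(0+1)*0 and v ∈ (⟨1,0⟩)*, Spoiler can play two positions in u (a position labelled 1 immediately followed by a position labelled 0) such that Duplicator cannot respond in v while respecting the neighbouring constraint. -/

import Mathlib

/-- Validity of a position of the integer game: `u` is a word of integers,
`v` a word of pairs `⟨i, i-1⟩` (written `(i, i-1)`), `ts` the list of pairs of
matched token positions. It requires: order agreement of positions; a
`u`-token labelled `t` matched to a `v`-token labelled `⟨s+1, s⟩` satisfies
`t ∈ {s+1, s}`; neighbours are matched to neighbours; and consecutive
`v`-tokens labelled `⟨i, i-1⟩ ⟨j, j-1⟩` have matched `u`-labels `(i, j)` or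
`(i-1, j-1)`, not mixed. -/
def IVal (u : List ℕ) (v : List (ℕ × ℕ)) (ts : List (ℕ × ℕ)) : Prop :=
  (∀ p ∈ ts, p.1 < u.length ∧ p.2 < v.length) ∧
  (∀ p ∈ ts, ∀ q ∈ ts, (p.1 ≤ q.1 ↔ p.2 ≤ q.2)) ∧
  (∀ p ∈ ts, ∀ (a : ℕ) (s : ℕ × ℕ), u[p.1]? = some a → v[p.2]? = some s →
      a = s.1 ∨ a = s.2) ∧
  (∀ p ∈ ts, ∀ q ∈ ts, (q.1 = p.1 + 1 ↔ q.2 = p.2 + 1)) ∧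
  (∀ p ∈ ts, ∀ q ∈ ts, q.1 = p.1 + 1 → q.2 = p.2 + 1 →
      ∀ (a b : ℕ) (s t : ℕ × ℕ),
        u[p.1]? = some a → u[q.1]? = some b →
        v[p.2]? = some s → v[q.2]? = some t →
        (a = s.1 ∧ b = t.1) ∨ (a = s.2 ∧ b = t.2))

/-- Spoiler wins the integer game on `(u, v)` from position `ts` within `k`
rounds. -/
def SWin (u : List ℕ) (v : List (ℕ × ℕ)) : ℕ → List (ℕ × ℕ) → Prop
  | 0, ts => ¬ IVal u v ts
  | k + 1, ts => ¬ IVal u v ts ∨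
      (∃ i, i < u.length ∧ ∀ j, j < v.length → SWin u v k ((i, j) :: ts)) ∨
      (∃ j, j < v.length ∧ ∀ i, i < u.length → SWin u v k ((i, j) :: ts))

/-- Spoiler wins the 1-integer game in 2 moves: for any
`u ∈ 1(0+1)*0` and `v ∈ ⟨1,0⟩*`, Spoiler can play two consecutive positions
in `u`, labelled `1` then `0`, such that Duplicator has no valid response
in `v`. -/

lemma exists_drop_aux (w : List ℕ) (hw : ∀ x ∈ w, x ≤ 1) :
    ∃ i, ((1 :: w ++ [0]) : List ℕ)[i]? = some 1 ∧
      (1 :: w ++ [0])[i + 1]? = some 0 := by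
  induction w with
  | nil => exact ⟨0, rfl, rfl⟩
  | cons x w ih =>
    have hx := hw x List.mem_cons_self
    interval_cases x
    · exact ⟨0, rfl, by simp⟩
    · obtain ⟨i, h1, h2⟩ := ih (fun y hy => hw y (List.mem_cons_of_mem _ hy))
      exact ⟨i + 1, by simpa using h1, by simpa using h2⟩

theorem spoiler_wins_one_integer_game (w : List ℕ) (hw : ∀ x ∈ w, x ≤ 1)
    (v : List (ℕ × ℕ)) (hv : ∀ s ∈ v, s = (1, 0)) :
    ∃ i : ℕ, ((1 :: w ++ [0]) : List ℕ)[i]? = some 1 ∧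
      (1 :: w ++ [0])[i + 1]? = some 0 ∧
      ∀ j j' : ℕ, j < v.length → j' < v.length →
        ¬ IVal (1 :: w ++ [0]) v [(i, j), (i + 1, j')] := by
  
  obtain ⟨i, h1, h2⟩ := exists_drop_aux w hw
  refine ⟨i, h1, h2, fun j j' hj hj' hval => ?_⟩
  obtain ⟨hlen, hord, hlab, hnbr, hmix⟩ := hval
  have hmem1 : ((i, j) : ℕ × ℕ) ∈ [(i, j), (i + 1, j')] := by simp
  have hmem2 : ((i + 1, j') : ℕ × ℕ) ∈ [(i, j), (i + 1, j')] := by simp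
  have hj1 : j' = j + 1 := (hnbr (i, j) hmem1 (i + 1, j') hmem2).mp rfl
  have vs : v[j]? = some (1, 0) := by
    rw [List.getElem?_eq_getElem hj]
    exact congrArg some (hv _ (List.getElem_mem hj))
  have vt : v[j']? = some (1, 0) := by
    rw [List.getElem?_eq_getElem hj']
    exact congrArg some (hv _ (List.getElem_mem hj'))
  have := hmix (i, j) hmem1 (i + 1, j') hmem2 rfl hj1 1 0 (1, 0) (1, 0) h1 h2 vs vt
  simp at this
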